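/- Let (a,b,c) ∈ ℝ³. There exists a horizontal future-directed causal Lipschitz curve γ : [0,1] → ℝ³ with γ(0) = (0,0,0) and γ(1) = (a,b,c) if and only if a > 0 and −a² + b² + 4|c| ≤ 0. (Equivalently, the causal future of the origin in the sub-Lorentzian Heisenberg group is {(x,y,z) : x ≥ 0 and −x² + y² + 4|z| ≤ 0}.) -/

import Mathlib

open MeasureTheory Set

/-- `γ` is Lipschitz on `[0,1]`. -/
def IsLipCurve3 (γ : ℝ → ℝ × ℝ × ℝ) : Prop :=
  ∃ K, LipschitzOnWith K γ (Icc (0:ℝ) 1)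

/-- A curve in the Heisenberg group is horizontal if, for almost every `t ∈ [0,1]`,
`γ₃'(t) = (γ₁(t)γ₂'(t) − γ₁'(t)γ₂(t))/2`. -/
def Horizontal (γ : ℝ → ℝ × ℝ × ℝ) : Prop :=
  ∀ᵐ t ∂(volume.restrict (Icc (0:ℝ) 1)),
    deriv (fun s => (γ s).2.2) t =
      ((γ t).1 * deriv (fun s => (γ s).2.1) t -
        deriv (fun s => (γ s).1) t * (γ t).2.1) / 2

/-- A horizontal curve is future-directed causal if, for almost every `t ∈ [0,1]`,
`γ₁'(t) ≥ |γ₂'(t)|` and `γ₁'(t) > 0`. -/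
def IsFDCausal3 (γ : ℝ → ℝ × ℝ × ℝ) : Prop :=
  ∀ᵐ t ∂(volume.restrict (Icc (0:ℝ) 1)),
    |deriv (fun s => (γ s).2.1) t| ≤ deriv (fun s => (γ s).1) t ∧
      0 < deriv (fun s => (γ s).1) t

/-- A horizontal curve is future-directed timelike if, for almost every `t ∈ [0,1]`,
`γ₁'(t) > |γ₂'(t)|`. -/
def IsFDTimelike3 (γ : ℝ → ℝ × ℝ × ℝ) : Prop :=
  ∀ᵐ t ∂(volume.restrict (Icc (0:ℝ) 1)),
    |deriv (fun s => (γ s).2.1) t| < deriv (fun s => (γ s).1) t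

/-- The Lorentzian length of a (causal) curve. -/
noncomputable def lorLength3 (γ : ℝ → ℝ × ℝ × ℝ) : ℝ :=
  ∫ t in (0:ℝ)..1,
    Real.sqrt ((deriv (fun s => (γ s).1) t)^2 - (deriv (fun s => (γ s).2.1) t)^2)

/-- The sub-Riemannian length of a horizontal curve. -/
noncomputable def sRLength3 (γ : ℝ → ℝ × ℝ × ℝ) : ℝ :=
  ∫ t in (0:ℝ)..1,
    Real.sqrt ((deriv (fun s => (γ s).1) t)^2 + (deriv (fun s => (γ s).2.1) t)^2)

/-- Admissible (horizontal future-directed causal Lipschitz) curves from `p` to `q`. -/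
def AdmCurve (p q : ℝ × ℝ × ℝ) (γ : ℝ → ℝ × ℝ × ℝ) : Prop :=
  IsLipCurve3 γ ∧ Horizontal γ ∧ IsFDCausal3 γ ∧ γ 0 = p ∧ γ 1 = q

/-- Causal precedence: `p ≤ q`. -/
def CausalLE (p q : ℝ × ℝ × ℝ) : Prop :=
  p = q ∨ ∃ γ, AdmCurve p q γ

/-- The causal diamond `J(p,q)`. -/
def causalDiamond (p q : ℝ × ℝ × ℝ) : Set (ℝ × ℝ × ℝ) :=
  {r | CausalLE p r ∧ CausalLE r q}

/-- The time separation function `τ` (equal to `0`, by convention on real `sSup`,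
if there is no admissible curve). -/
noncomputable def timeSep (p q : ℝ × ℝ × ℝ) : ℝ :=
  sSup (lorLength3 '' {γ | AdmCurve p q γ})

/-- The sub-Riemannian distance. -/
noncomputable def sRDist (p q : ℝ × ℝ × ℝ) : ℝ :=
  sInf (sRLength3 '' {γ | IsLipCurve3 γ ∧ Horizontal γ ∧ γ 0 = p ∧ γ 1 = q})

/-- Key: a globally Lipschitz function with a.e. nonnegative derivative on `Ioo u v`
increases from `u` to `v`. -/
lemma lip_mono_aux {K : NNReal} {f : ℝ → ℝ} (hf : LipschitzWith K f) {u v : ℝ} (huv : u ≤ v)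
    (hd : ∀ᵐ t, t ∈ Ioo u v → 0 ≤ deriv f t) : f u ≤ f v := by
  rcases eq_or_lt_of_le huv with rfl | huv
  · exact le_rfl
  set g : ℝ → ℝ := fun t => f t + K * t with hgdef
  have hg : Monotone g := by
    intro s t hst
    have := hf.dist_le_mul s t
    rw [Real.dist_eq, Real.dist_eq] at this
    have h2 := abs_le.1 this
    have h3 := abs_le.1 (le_refl |s - t|) -- dummy
    simp only [hgdef]
    have : |f s - f t| ≤ K * (t - s) := by
      calc |f s - f t| ≤ K * |s - t| := this
        _ = K * (t - s) := by rw [abs_sub_comm, abs_of_nonneg (by linarith)]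
    have := abs_le.1 this
    linarith [this.1, this.2]
  have hgc : Continuous g := by
    exact (hf.continuous).add (continuous_const.mul continuous_id)
  have hsf : ∀ x, hg.stieltjesFunction x = g x := by
    intro x
    rw [hg.stieltjesFunction_eq]
    exact rightLim_eq_of_tendsto
      (hgc.continuousAt.continuousWithinAt)
  set μ := hg.stieltjesFunction.measure with hμ
  have hae : ∀ᵐ x, x ∈ Ioo u v → ENNReal.ofReal (K : ℝ) ≤ μ.rnDeriv volume x := by
    filter_upwards [hg.ae_hasDerivAt, hd] with x hx hx' hmem
    have hfd : HasDerivAt f ((μ.rnDeriv volume x).toReal - K) x := by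
      have h := hx.sub ((hasDerivAt_id x).const_mul (K : ℝ))
      simp only [hgdef, id, mul_one] at h
      have he : ((fun t => f t + (K:ℝ) * t) - fun y => (K:ℝ) * y) = f := by
        funext w; simp only [Pi.sub_apply]; ring
      rwa [he] at h
    have h0 : 0 ≤ (μ.rnDeriv volume x).toReal - K := by
      rw [← hfd.deriv]; exact hx' hmem
    rcases eq_or_ne (μ.rnDeriv volume x) ⊤ with h | h
    · simp [h]
    · rw [← ENNReal.ofReal_toReal h]
      exact ENNReal.ofReal_le_ofReal (by linarith)
  have key : ENNReal.ofReal ((K : ℝ) * (v - u)) ≤ ENNReal.ofReal (g v - g u) := by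
    calc ENNReal.ofReal ((K : ℝ) * (v - u))
        = ENNReal.ofReal (K : ℝ) * volume (Ioo u v) := by
          rw [Real.volume_Ioo, ENNReal.ofReal_mul (by positivity)]
      _ = ∫⁻ x in Ioo u v, ENNReal.ofReal (K : ℝ) := by rw [setLIntegral_const]
      _ ≤ ∫⁻ x in Ioo u v, μ.rnDeriv volume x := by
          apply lintegral_mono_ae
          rw [ae_restrict_iff' measurableSet_Ioo]
          exact hae
      _ = volume.withDensity (μ.rnDeriv volume) (Ioo u v) := by
          rw [withDensity_apply _ measurableSet_Ioo]
      _ ≤ μ (Ioo u v) := Measure.withDensity_rnDeriv_le μ volume _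
      _ ≤ μ (Ioc u v) := measure_mono Ioo_subset_Ioc_self
      _ = ENNReal.ofReal (g v - g u) := by
          rw [hμ, StieltjesFunction.measure_Ioc, hsf, hsf]
  have : (K : ℝ) * (v - u) ≤ g v - g u := by
    by_contra hcon
    push_neg at hcon
    have h1 : ENNReal.ofReal (g v - g u) < ENNReal.ofReal ((K : ℝ) * (v - u)) := by
      exact (ENNReal.ofReal_lt_ofReal_iff_of_nonneg (sub_nonneg.2 (hg huv.le))).2 hcon
    exact absurd key (not_le.2 h1)
  simp only [hgdef] at this
  linarith

/-- a.e. point of `[0,1]` is in `(0,1)`. -/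
lemma ae_Ioo01 : ∀ᵐ t ∂(volume.restrict (Icc (0:ℝ) 1)), t ∈ Ioo (0:ℝ) 1 := by
  have h1 : ∀ᵐ t ∂(volume.restrict (Icc (0:ℝ) 1)), t ∈ Icc (0:ℝ) 1 :=
    ae_restrict_mem measurableSet_Icc
  have h3 : ∀ᵐ t ∂(volume : Measure ℝ), t ∉ ({0, 1} : Set ℝ) := by
    have h0 : (volume : Measure ℝ) {0, 1} = 0 :=
      ((Set.finite_singleton 1).insert 0).measure_zero _
    rw [ae_iff]
    have he : {a : ℝ | ¬ a ∉ ({0, 1} : Set ℝ)} = ({0, 1} : Set ℝ) := by ext a; simp; tauto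
    rw [he]; exact h0
  filter_upwards [h1, ae_restrict_of_ae h3] with t ht ht2
  simp only [mem_insert_iff, mem_singleton_iff, not_or] at ht2
  exact ⟨lt_of_le_of_ne ht.1 (Ne.symm ht2.1), lt_of_le_of_ne ht.2 ht2.2⟩

lemma lipOnIcc_of_bound {f : ℝ → ℝ} {C : ℝ} (hC : 0 ≤ C)
    (h : ∀ s ∈ Icc (0:ℝ) 1, ∀ t ∈ Icc (0:ℝ) 1, |f s - f t| ≤ C * |s - t|) :
    ∃ K : NNReal, LipschitzOnWith K f (Icc (0:ℝ) 1) := by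
  refine ⟨(⟨C, hC⟩ : NNReal), ?_⟩
  apply lipschitzOnWith_iff_dist_le_mul.2
  intro u hu v hv
  rw [Real.dist_eq, Real.dist_eq]
  exact h u hu v hv

lemma bound_of_lipOn {f : ℝ → ℝ} {K : NNReal} (h : LipschitzOnWith K f (Icc (0:ℝ) 1)) :
    ∀ s ∈ Icc (0:ℝ) 1, ∀ t ∈ Icc (0:ℝ) 1, |f s - f t| ≤ K * |s - t| := by
  rw [lipschitzOnWith_iff_dist_le_mul] at h
  intro s hs t ht
  have := h s hs t ht
  rwa [Real.dist_eq, Real.dist_eq] at this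

/-- Lipschitz on `[0,1]` + a.e. nonneg derivative implies monotone on `[0,1]`. -/
lemma monoOn_of_deriv_nonneg_ae {f : ℝ → ℝ}
    (hf : ∃ K : NNReal, LipschitzOnWith K f (Icc (0:ℝ) 1))
    (hd : ∀ᵐ t ∂(volume.restrict (Icc (0:ℝ) 1)), 0 ≤ deriv f t) :
    MonotoneOn f (Icc (0:ℝ) 1) := by
  obtain ⟨K, hf⟩ := hf
  obtain ⟨F, hF, hEq⟩ := hf.extend_real
  have hd' : ∀ᵐ t, t ∈ Icc (0:ℝ) 1 → 0 ≤ deriv f t := (ae_restrict_iff' measurableSet_Icc).1 hd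
  intro u hu v hv huv
  rw [hEq hu, hEq hv]
  apply lip_mono_aux hF huv
  filter_upwards [hd'] with t ht hmem
  have htI : t ∈ Ioo (0:ℝ) 1 := ⟨lt_of_le_of_lt hu.1 hmem.1, lt_of_lt_of_le hmem.2 hv.2⟩
  have hev : F =ᶠ[nhds t] f := by
    filter_upwards [Icc_mem_nhds htI.1 htI.2] with s hs
    exact (hEq hs).symm
  rw [hev.deriv_eq]
  exact ht (Ioo_subset_Icc_self htI)

/-- real Lipschitz from a bound -/
lemma lipR {f : ℝ → ℝ} {C : ℝ} (hC : 0 ≤ C) (h : ∀ s t, |f s - f t| ≤ C * |s - t|) :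
    LipschitzWith ⟨C, hC⟩ f := by
  apply LipschitzWith.of_dist_le_mul
  intro s t
  rw [Real.dist_eq, Real.dist_eq]
  exact h s t

lemma piecewise_lip {f g : ℝ → ℝ} {t₀ C : ℝ}
    (hf : ∀ s t, |f s - f t| ≤ C * |s - t|) (hg : ∀ s t, |g s - g t| ≤ C * |s - t|)
    (heq : f t₀ = g t₀) :
    ∀ s t, |(if s ≤ t₀ then f s else g s) - (if t ≤ t₀ then f t else g t)| ≤ C * |s - t| := by
  have key : ∀ s t, t ≤ s →
      |(if s ≤ t₀ then f s else g s) - (if t ≤ t₀ then f t else g t)| ≤ C * |s - t| := by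
    intro s t hst
    by_cases hs : s ≤ t₀
    · rw [if_pos hs, if_pos (hst.trans hs)]
      exact hf s t
    · rw [if_neg hs]
      push_neg at hs
      by_cases ht : t ≤ t₀
      · rw [if_pos ht]
        have e1 := hg s t₀
        have e2 := hf t₀ t
        rw [heq] at e2
        have hC' : 0 ≤ C := by
          have := hf t t
          simp at this
          by_contra hcc
          push_neg at hcc
          have := hf (t+1) t
          have h2 : |f (t+1) - f t| ≥ 0 := abs_nonneg _
          have h3 : |(t:ℝ) + 1 - t| = 1 := by norm_num
          rw [h3, mul_one] at this
          linarith
        calc |g s - f t| = |(g s - g t₀) + (g t₀ - f t)| := by ring_nf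
          _ ≤ |g s - g t₀| + |g t₀ - f t| := abs_add_le _ _
          _ ≤ C * |s - t₀| + C * |t₀ - t| := add_le_add e1 e2
          _ = C * |s - t| := by
              rw [abs_of_nonneg (by linarith : (0:ℝ) ≤ s - t₀),
                abs_of_nonneg (by linarith : (0:ℝ) ≤ t₀ - t),
                abs_of_nonneg (by linarith : (0:ℝ) ≤ s - t)]
              ring
      · rw [if_neg ht]
        exact hg s t
  intro s t
  rcases le_total t s with hst | hst
  · exact key s t hst
  · rw [abs_sub_comm, abs_sub_comm s t]
    exact key t s hst

/-- a.e. avoidance of one extra point. -/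
lemma ae_ne_pt (t₀ : ℝ) : ∀ᵐ t ∂(volume.restrict (Icc (0:ℝ) 1)), t ≠ t₀ := by
  apply ae_restrict_of_ae
  rw [ae_iff]
  have he : {a : ℝ | ¬ a ≠ t₀} = {t₀} := by ext u; simp
  rw [he]
  exact Real.volume_singleton

lemma prod3_ext {p q : ℝ × ℝ × ℝ} (h1 : p.1 = q.1) (h2 : p.2.1 = q.2.1)
    (h3 : p.2.2 = q.2.2) : p = q := by
  rcases p with ⟨p1, p2, p3⟩
  rcases q with ⟨q1, q2, q3⟩
  simp_all

lemma construct_nonneg (a b c : ℝ) (ha : 0 < a) (hc : 0 ≤ c) (hmain : b^2 + 4*c ≤ a^2) :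
    ∃ γ : ℝ → ℝ × ℝ × ℝ,
      (∃ K, LipschitzOnWith K γ (Icc (0:ℝ) 1)) ∧
      (∀ᵐ t ∂(volume.restrict (Icc (0:ℝ) 1)),
        deriv (fun s => (γ s).2.2) t =
          ((γ t).1 * deriv (fun s => (γ s).2.1) t - deriv (fun s => (γ s).1) t * (γ t).2.1) / 2) ∧
      (∀ᵐ t ∂(volume.restrict (Icc (0:ℝ) 1)),
        |deriv (fun s => (γ s).2.1) t| ≤ deriv (fun s => (γ s).1) t ∧
          0 < deriv (fun s => (γ s).1) t) ∧
      γ 0 = (0, 0, 0) ∧ γ 1 = (a, b, c) := by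
  have hb1 : -a ≤ b := by nlinarith
  have hb2 : b ≤ a := by nlinarith
  have hab : 0 ≤ a + b := by linarith
  set s : ℝ := 2 * c / (a + b) with hs_def
  have hs0 : 0 ≤ s := div_nonneg (by linarith) hab
  have hs2 : s ≤ (a - b) / 2 := by
    rcases eq_or_lt_of_le hab with h | h
    · have hc0 : c = 0 := by nlinarith
      rw [hs_def, hc0]
      simp
      linarith
    · rw [hs_def, div_le_iff₀ h]
      nlinarith
  have hsa : s < a := by
    rcases eq_or_lt_of_le hb1 with h | h
    · have : a + b = 0 := by linarith
      have hc0 : c = 0 := by nlinarith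
      rw [hs_def, hc0]
      simpa using ha
    · linarith
  have has : 0 < a - s := by linarith
  set m : ℝ := (b + s) / (a - s) with hm_def
  have hm1 : m ≤ 1 := by
    rw [hm_def, div_le_one has]
    linarith
  have hm2 : -1 ≤ m := by
    rw [hm_def, le_div_iff₀ has]
    linarith
  set t₀ : ℝ := s / a with ht₀_def
  have ht₀0 : 0 ≤ t₀ := div_nonneg hs0 ha.le
  have ht₀1 : t₀ < 1 := by
    rw [ht₀_def, div_lt_one ha]
    exact hsa
  have hat₀ : a * t₀ = s := by
    rw [ht₀_def]; field_simp
  have hmas : m * (a - s) = b + s := by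
    rw [hm_def]; field_simp
  set C₀ : ℝ := a * s * (m + 1) / 2 with hC₀_def
  set Y : ℝ → ℝ := fun t => if t ≤ t₀ then -a * t else m * (a * t - s) - s with hY_def
  set Z : ℝ → ℝ := fun t => if t ≤ t₀ then 0 else C₀ * (t - t₀) with hZ_def
  set γ : ℝ → ℝ × ℝ × ℝ := fun t => (a * t, Y t, Z t) with hγ_def
  clear_value s m t₀ C₀ Y Z γ
  have ha' : a ≠ 0 := ne_of_gt ha
  have hγ1 : ∀ u, (γ u).1 = a * u := by intro u; rw [hγ_def]
  have hγ2 : ∀ u, (γ u).2.1 = Y u := by intro u; rw [hγ_def]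
  have hγ3 : ∀ u, (γ u).2.2 = Z u := by intro u; rw [hγ_def]
  -- derivative facts
  have hderiv1 : ∀ t : ℝ, deriv (fun u => (γ u).1) t = a := by
    intro t
    have : (fun u => (γ u).1) = fun u => a * u := funext fun u => hγ1 u
    rw [this]
    simpa using ((hasDerivAt_id t).const_mul a).deriv
  have hYlt : ∀ t < t₀, deriv (fun u => (γ u).2.1) t = -a := by
    intro t ht
    have hev : (fun u => (γ u).2.1) =ᶠ[nhds t] (fun u => -a * u) := by
      filter_upwards [Iio_mem_nhds ht] with u hu
      rw [hγ2 u, hY_def]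
      simp only [if_pos (mem_Iio.1 hu).le]
    rw [hev.deriv_eq]
    simpa using ((hasDerivAt_id t).const_mul (-a)).deriv
  have hYgt : ∀ t, t₀ < t → deriv (fun u => (γ u).2.1) t = m * a := by
    intro t ht
    have hev : (fun u => (γ u).2.1) =ᶠ[nhds t] (fun u => m * (a * u - s) - s) := by
      filter_upwards [Ioi_mem_nhds ht] with u hu
      rw [hγ2 u, hY_def]
      simp only [if_neg (not_le.2 (mem_Ioi.1 hu))]
    rw [hev.deriv_eq]
    have H : HasDerivAt (fun u => m * (a * u - s) - s) (m * a) t := by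
      have h1 : HasDerivAt (fun u : ℝ => a * u) a t := by
        simpa using (hasDerivAt_id t).const_mul a
      have h2 := ((h1.sub_const s).const_mul m).sub_const s
      simpa using h2
    exact H.deriv
  have hZlt : ∀ t < t₀, deriv (fun u => (γ u).2.2) t = 0 := by
    intro t ht
    have hev : (fun u => (γ u).2.2) =ᶠ[nhds t] (fun _ => (0:ℝ)) := by
      filter_upwards [Iio_mem_nhds ht] with u hu
      rw [hγ3 u, hZ_def]
      simp only [if_pos (mem_Iio.1 hu).le]
    rw [hev.deriv_eq]
    exact deriv_const t 0
  have hZgt : ∀ t, t₀ < t → deriv (fun u => (γ u).2.2) t = C₀ := by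
    intro t ht
    have hev : (fun u => (γ u).2.2) =ᶠ[nhds t] (fun u => C₀ * (u - t₀)) := by
      filter_upwards [Ioi_mem_nhds ht] with u hu
      rw [hγ3 u, hZ_def]
      simp only [if_neg (not_le.2 (mem_Ioi.1 hu))]
    rw [hev.deriv_eq]
    have H : HasDerivAt (fun u => C₀ * (u - t₀)) C₀ t := by
      simpa using ((hasDerivAt_id t).sub_const t₀).const_mul C₀
    exact H.deriv
  refine ⟨γ, ?_, ?_, ?_, ?_, ?_⟩
  · -- Lipschitz
    have l1 : LipschitzWith ⟨a, ha.le⟩ (fun t => a * t) := by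
      apply lipR
      intro u v
      have : a * u - a * v = a * (u - v) := by ring
      rw [this, abs_mul, abs_of_nonneg ha.le]
    have lf : ∀ u v : ℝ, |(-a * u) - (-a * v)| ≤ a * |u - v| := by
      intro u v
      have : -a * u - -a * v = (-a) * (u - v) := by ring
      rw [this, abs_mul, abs_neg, abs_of_nonneg ha.le]
    have lg : ∀ u v : ℝ, |(m * (a * u - s) - s) - (m * (a * v - s) - s)| ≤ a * |u - v| := by
      intro u v
      have : (m * (a * u - s) - s) - (m * (a * v - s) - s) = (m * a) * (u - v) := by ring
      rw [this, abs_mul]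
      apply mul_le_mul_of_nonneg_right _ (abs_nonneg _)
      rw [abs_mul, abs_of_nonneg ha.le]
      calc |m| * a ≤ 1 * a := by
            apply mul_le_mul_of_nonneg_right _ ha.le
            rw [abs_le]; exact ⟨hm2, hm1⟩
        _ = a := one_mul a
    have heqY : -a * t₀ = m * (a * t₀ - s) - s := by
      rw [hat₀]
      simp
      linarith [hat₀]
    have l2 : LipschitzWith ⟨a, ha.le⟩ Y := by
      apply lipR
      intro u v
      rw [hY_def]
      exact piecewise_lip lf lg heqY u v
    have hC₀0 : 0 ≤ C₀ := by
      rw [hC₀_def]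
      have : 0 ≤ m + 1 := by linarith
      positivity
    have hC₀a : C₀ ≤ a * a := by
      rw [hC₀_def]
      have h1 : m + 1 ≤ 2 := by linarith
      have h2 : s ≤ a := hsa.le
      nlinarith
    have lzf : ∀ u v : ℝ, |(0:ℝ) - 0| ≤ (a * a) * |u - v| := by
      intro u v; simp; positivity
    have lzg : ∀ u v : ℝ, |C₀ * (u - t₀) - C₀ * (v - t₀)| ≤ (a * a) * |u - v| := by
      intro u v
      have : C₀ * (u - t₀) - C₀ * (v - t₀) = C₀ * (u - v) := by ring
      rw [this, abs_mul, abs_of_nonneg hC₀0]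
      exact mul_le_mul_of_nonneg_right hC₀a (abs_nonneg _)
    have heqZ : (fun _ : ℝ => (0:ℝ)) t₀ = (fun u => C₀ * (u - t₀)) t₀ := by simp
    have l3 : LipschitzWith ⟨a * a, by positivity⟩ Z := by
      apply lipR
      intro u v
      rw [hZ_def]
      exact piecewise_lip lzf lzg heqZ u v
    refine ⟨⟨a, ha.le⟩ ⊔ (⟨a, ha.le⟩ ⊔ ⟨a * a, by positivity⟩), ?_⟩
    rw [hγ_def]
    exact (l1.prodMk (l2.prodMk l3)).lipschitzOnWith
  · -- Horizontal
    filter_upwards [ae_Ioo01, ae_ne_pt t₀] with t htI htne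
    rcases lt_or_gt_of_ne htne with ht | ht
    · rw [hZlt t ht, hYlt t ht, hderiv1]
      have hY : Y t = -a * t := by
        rw [hY_def]; simp only [if_pos ht.le]
      rw [hγ1 t, hγ2 t, hY]
      ring
    · rw [hZgt t ht, hYgt t ht, hderiv1]
      have hY : Y t = m * (a * t - s) - s := by
        rw [hY_def]; simp only [if_neg (not_le.2 ht)]
      rw [hγ1 t, hγ2 t, hY, hC₀_def]
      ring
  · -- causal
    filter_upwards [ae_Ioo01, ae_ne_pt t₀] with t htI htne
    rw [hderiv1]
    rcases lt_or_gt_of_ne htne with ht | ht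
    · rw [hYlt t ht]
      constructor
      · rw [abs_neg, abs_of_nonneg ha.le]
      · exact ha
    · rw [hYgt t ht]
      constructor
      · rw [abs_mul, abs_of_nonneg ha.le]
        calc |m| * a ≤ 1 * a := by
              apply mul_le_mul_of_nonneg_right _ ha.le
              rw [abs_le]; exact ⟨hm2, hm1⟩
          _ = a := one_mul a
      · exact ha
  · -- γ 0
    have hY0 : Y 0 = 0 := by rw [hY_def]; simp only [if_pos ht₀0]; ring
    have hZ0 : Z 0 = 0 := by rw [hZ_def]; simp only [if_pos ht₀0]
    apply prod3_ext
    · rw [hγ1 0]; norm_num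
    · rw [hγ2 0, hY0]
    · rw [hγ3 0, hZ0]
  · -- γ 1
    have hnle : ¬ (1:ℝ) ≤ t₀ := not_le.2 ht₀1
    have hY1 : Y 1 = b := by
      rw [hY_def]
      simp only [if_neg hnle]
      have : m * (a * 1 - s) = b + s := by rw [mul_one]; exact hmas
      rw [this]; ring
    have hZ1 : Z 1 = c := by
      rw [hZ_def]
      simp only [if_neg hnle]
      rcases eq_or_lt_of_le hab with h | h
      · have hc0 : c = 0 := by nlinarith
        have hs00 : s = 0 := by rw [hs_def, ← h]; simp [hc0]
        rw [hC₀_def, hs00, hc0]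
        ring
      · have h1 : C₀ * (1 - t₀) = s * (m + 1) * (a - s) / 2 := by
          rw [hC₀_def, ht₀_def]
          field_simp
        rw [h1]
        have h2 : (m + 1) * (a - s) = a + b := by linear_combination hmas
        have h3 : s * (a + b) = 2 * c := by
          rw [hs_def]
          field_simp
        linear_combination (s / 2) * h2 + (1 / 2) * h3
    apply prod3_ext
    · rw [hγ1 1]; norm_num
    · rw [hγ2 1, hY1]
    · rw [hγ3 1, hZ1]

lemma forward_dir (a b c : ℝ)
    (γ : ℝ → ℝ × ℝ × ℝ)
    (hLip : ∃ K, LipschitzOnWith K γ (Icc (0:ℝ) 1))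
    (hHor : ∀ᵐ t ∂(volume.restrict (Icc (0:ℝ) 1)),
      deriv (fun s => (γ s).2.2) t =
        ((γ t).1 * deriv (fun s => (γ s).2.1) t - deriv (fun s => (γ s).1) t * (γ t).2.1) / 2)
    (hCaus : ∀ᵐ t ∂(volume.restrict (Icc (0:ℝ) 1)),
      |deriv (fun s => (γ s).2.1) t| ≤ deriv (fun s => (γ s).1) t ∧
        0 < deriv (fun s => (γ s).1) t)
    (h0 : γ 0 = (0, 0, 0)) (h1 : γ 1 = (a, b, c)) :
    0 < a ∧ -a^2 + b^2 + 4 * |c| ≤ 0 := by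
  obtain ⟨K, hK⟩ := hLip
  set x : ℝ → ℝ := fun s => (γ s).1 with hxd
  set y : ℝ → ℝ := fun s => (γ s).2.1 with hyd
  set z : ℝ → ℝ := fun s => (γ s).2.2 with hzd
  have hx0 : x 0 = 0 := by rw [hxd]; simp [h0]
  have hy0 : y 0 = 0 := by rw [hyd]; simp [h0]
  have hz0 : z 0 = 0 := by rw [hzd]; simp [h0]
  have hx1 : x 1 = a := by rw [hxd]; simp [h1]
  have hy1 : y 1 = b := by rw [hyd]; simp [h1]
  have hz1 : z 1 = c := by rw [hzd]; simp [h1]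
  -- Lipschitz components
  have hxL : LipschitzOnWith K x (Icc 0 1) := by
    have := (LipschitzWith.prod_fst (α := ℝ) (β := ℝ × ℝ)).comp_lipschitzOnWith hK
    rw [one_mul] at this; exact this
  have hyL : LipschitzOnWith K y (Icc 0 1) := by
    have := ((LipschitzWith.prod_fst (α := ℝ) (β := ℝ)).comp
      (LipschitzWith.prod_snd (α := ℝ) (β := ℝ × ℝ))).comp_lipschitzOnWith hK
    rw [one_mul, one_mul] at this; exact this
  have hzL : LipschitzOnWith K z (Icc 0 1) := by
    have := ((LipschitzWith.prod_snd (α := ℝ) (β := ℝ)).comp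
      (LipschitzWith.prod_snd (α := ℝ) (β := ℝ × ℝ))).comp_lipschitzOnWith hK
    rw [one_mul, one_mul] at this; exact this
  have hxB : ∀ t ∈ Icc (0:ℝ) 1, |x t| ≤ K := by
    intro t ht
    have := bound_of_lipOn hxL t ht 0 (by constructor <;> norm_num)
    rw [hx0, sub_zero, sub_zero] at this
    calc |x t| ≤ K * |t| := this
      _ ≤ K * 1 := by
          apply mul_le_mul_of_nonneg_left _ (K.coe_nonneg)
          rw [abs_of_nonneg ht.1]; exact ht.2
      _ = K := mul_one _
  have hyB : ∀ t ∈ Icc (0:ℝ) 1, |y t| ≤ K := by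
    intro t ht
    have := bound_of_lipOn hyL t ht 0 (by constructor <;> norm_num)
    rw [hy0, sub_zero, sub_zero] at this
    calc |y t| ≤ K * |t| := this
      _ ≤ K * 1 := by
          apply mul_le_mul_of_nonneg_left _ (K.coe_nonneg)
          rw [abs_of_nonneg ht.1]; exact ht.2
      _ = K := mul_one _
  -- a.e. package
  have hae : ∀ᵐ t ∂(volume.restrict (Icc (0:ℝ) 1)),
      t ∈ Ioo (0:ℝ) 1 ∧ DifferentiableAt ℝ x t ∧ DifferentiableAt ℝ y t ∧
        DifferentiableAt ℝ z t ∧ |deriv y t| ≤ deriv x t ∧ 0 < deriv x t ∧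
        deriv z t = (x t * deriv y t - deriv x t * y t) / 2 := by
    filter_upwards [ae_Ioo01, hHor, hCaus,
      hyL.ae_differentiableWithinAt measurableSet_Icc,
      hzL.ae_differentiableWithinAt measurableSet_Icc] with t htI hH hC hy' hz'
    have hIccN : Icc (0:ℝ) 1 ∈ nhds t := Icc_mem_nhds htI.1 htI.2
    have hdx : DifferentiableAt ℝ x t := by
      by_contra hcon
      rw [deriv_zero_of_not_differentiableAt hcon] at hC
      exact lt_irrefl 0 hC.2
    exact ⟨htI, hdx, hy'.differentiableAt hIccN, hz'.differentiableAt hIccN,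
      hC.1, hC.2, hH⟩
  -- monotone x
  have hxMono : MonotoneOn x (Icc 0 1) := by
    apply monoOn_of_deriv_nonneg_ae ⟨K, hxL⟩
    filter_upwards [hae] with t ht
    exact ht.2.2.2.2.2.1.le
  -- monotone x ± y
  have hPMono : MonotoneOn (fun t => x t + y t) (Icc 0 1) := by
    apply monoOn_of_deriv_nonneg_ae
    · apply lipOnIcc_of_bound (C := 2 * K) (by positivity)
      intro s hs t ht
      have h1 := bound_of_lipOn hxL s hs t ht
      have h2 := bound_of_lipOn hyL s hs t ht
      have e : x s + y s - (x t + y t) = (x s - x t) + (y s - y t) := by ring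
      rw [e]
      calc |x s - x t + (y s - y t)| ≤ |x s - x t| + |y s - y t| := abs_add_le _ _
        _ ≤ K * |s - t| + K * |s - t| := add_le_add h1 h2
        _ = 2 * K * |s - t| := by ring
    · filter_upwards [hae] with t ht
      obtain ⟨-, hdx, hdy, -, hcy, hcx, -⟩ := ht
      rw [show (fun t => x t + y t) = x + y from rfl, deriv_add hdx hdy]
      have := neg_abs_le (deriv y t)
      linarith
  have hQMono : MonotoneOn (fun t => x t - y t) (Icc 0 1) := by
    apply monoOn_of_deriv_nonneg_ae
    · apply lipOnIcc_of_bound (C := 2 * K) (by positivity)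
      intro s hs t ht
      have h1 := bound_of_lipOn hxL s hs t ht
      have h2 := bound_of_lipOn hyL s hs t ht
      have e : x s - y s - (x t - y t) = (x s - x t) - (y s - y t) := by ring
      rw [e]
      calc |x s - x t - (y s - y t)| ≤ |x s - x t| + |y s - y t| := abs_sub _ _
        _ ≤ K * |s - t| + K * |s - t| := add_le_add h1 h2
        _ = 2 * K * |s - t| := by ring
    · filter_upwards [hae] with t ht
      obtain ⟨-, hdx, hdy, -, hcy, hcx, -⟩ := ht
      rw [show (fun t => x t - y t) = x - y from rfl, deriv_sub hdx hdy]
      have := le_abs_self (deriv y t)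
      linarith
  have hP0 : ∀ t ∈ Icc (0:ℝ) 1, 0 ≤ x t + y t := by
    intro t ht
    have := hPMono (left_mem_Icc.2 (by norm_num)) ht ht.1
    simpa [hx0, hy0] using this
  have hQ0 : ∀ t ∈ Icc (0:ℝ) 1, 0 ≤ x t - y t := by
    intro t ht
    have := hQMono (left_mem_Icc.2 (by norm_num)) ht ht.1
    simpa [hx0, hy0] using this
  -- the quadratic functionals
  have etaLip : ∀ (ε : ℝ), |ε| = 1 → ∃ KK : NNReal,
      LipschitzOnWith KK (fun t => x t * x t - y t * y t - ε * 4 * z t) (Icc (0:ℝ) 1) := by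
    intro ε hε
    apply lipOnIcc_of_bound (C := 2 * K * K + 2 * K * K + 4 * K) (by positivity)
    intro s hs t ht
    have bx := bound_of_lipOn hxL s hs t ht
    have by' := bound_of_lipOn hyL s hs t ht
    have bz := bound_of_lipOn hzL s hs t ht
    have bxs := hxB s hs; have bxt := hxB t ht
    have bys := hyB s hs; have byt := hyB t ht
    have e : x s * x s - y s * y s - ε * 4 * z s - (x t * x t - y t * y t - ε * 4 * z t)
        = (x s + x t) * (x s - x t) - (y s + y t) * (y s - y t) - ε * 4 * (z s - z t) := by
      ring
    rw [e]
    have h1 : |(x s + x t) * (x s - x t)| ≤ 2 * K * (K * |s - t|) := by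
      rw [abs_mul]
      apply mul_le_mul _ bx (abs_nonneg _) (by positivity)
      calc |x s + x t| ≤ |x s| + |x t| := abs_add_le _ _
        _ ≤ 2 * K := by linarith
    have h2 : |(y s + y t) * (y s - y t)| ≤ 2 * K * (K * |s - t|) := by
      rw [abs_mul]
      apply mul_le_mul _ by' (abs_nonneg _) (by positivity)
      calc |y s + y t| ≤ |y s| + |y t| := abs_add_le _ _
        _ ≤ 2 * K := by linarith
    have h3 : |ε * 4 * (z s - z t)| ≤ 4 * (K * |s - t|) := by
      rw [abs_mul, abs_mul, hε]
      simpa using bz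
    calc |(x s + x t) * (x s - x t) - (y s + y t) * (y s - y t) - ε * 4 * (z s - z t)|
        ≤ |(x s + x t) * (x s - x t) - (y s + y t) * (y s - y t)| + |ε * 4 * (z s - z t)| :=
          abs_sub _ _
      _ ≤ |(x s + x t) * (x s - x t)| + |(y s + y t) * (y s - y t)| + |ε * 4 * (z s - z t)| := by
          have := abs_sub ((x s + x t) * (x s - x t)) ((y s + y t) * (y s - y t))
          linarith
      _ ≤ 2 * K * (K * |s - t|) + 2 * K * (K * |s - t|) + 4 * (K * |s - t|) := by linarith
      _ = (2 * K * K + 2 * K * K + 4 * K) * |s - t| := by ring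
  have etaDeriv : ∀ (ε : ℝ), ∀ t, DifferentiableAt ℝ x t → DifferentiableAt ℝ y t →
      DifferentiableAt ℝ z t →
      deriv (fun t => x t * x t - y t * y t - ε * 4 * z t) t =
        (deriv x t * x t + x t * deriv x t) - (deriv y t * y t + y t * deriv y t)
          - ε * 4 * deriv z t := by
    intro ε t hdx hdy hdz
    have H : HasDerivAt (fun t => x t * x t - y t * y t - ε * 4 * z t)
        ((deriv x t * x t + x t * deriv x t) - (deriv y t * y t + y t * deriv y t)
          - ε * 4 * deriv z t) t :=
      (((hdx.hasDerivAt.mul hdx.hasDerivAt).sub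
        (hdy.hasDerivAt.mul hdy.hasDerivAt)).sub ((hdz.hasDerivAt).const_mul (ε * 4)))
    exact H.deriv
  have etaMono : ∀ (ε : ℝ), |ε| = 1 →
      (∀ t ∈ Icc (0:ℝ) 1, 0 ≤ x t + ε * y t) →
      MonotoneOn (fun t => x t * x t - y t * y t - ε * 4 * z t) (Icc 0 1) := by
    intro ε hε hsign
    have hε2 : ε * ε = 1 := by
      have h := sq_abs ε
      rw [hε] at h
      nlinarith [h]
    apply monoOn_of_deriv_nonneg_ae (etaLip ε hε)
    filter_upwards [hae, ae_Ioo01] with t ht htI2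
    obtain ⟨htI, hdx, hdy, hdz, hcy, hcx, hH⟩ := ht
    rw [etaDeriv ε t hdx hdy hdz, hH]
    have key : (deriv x t * x t + x t * deriv x t) - (deriv y t * y t + y t * deriv y t)
        - ε * 4 * ((x t * deriv y t - deriv x t * y t) / 2)
        = 2 * (x t + ε * y t) * (deriv x t - ε * deriv y t) := by
      linear_combination (2 * y t * deriv y t) * hε2
    rw [key]
    apply mul_nonneg (mul_nonneg (by norm_num) (hsign t (Ioo_subset_Icc_self htI)))
    have h1 : ε * deriv y t ≤ |ε * deriv y t| := le_abs_self _
    rw [abs_mul, hε, one_mul] at h1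
    linarith
  -- endpoint inequalities
  have hIneq : ∀ (ε : ℝ), |ε| = 1 → (∀ t ∈ Icc (0:ℝ) 1, 0 ≤ x t + ε * y t) →
      0 ≤ a * a - b * b - ε * 4 * c := by
    intro ε hε hsign
    have h := etaMono ε hε hsign (left_mem_Icc.2 (by norm_num))
      (right_mem_Icc.2 (by norm_num)) (by norm_num)
    simp only [hx0, hy0, hz0, hx1, hy1, hz1] at h
    linarith [h]
  have hplus : 0 ≤ a * a - b * b - 4 * c := by
    have := hIneq 1 (by norm_num) (by intro t ht; simpa using hP0 t ht)
    linarith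
  have hminus : 0 ≤ a * a - b * b + 4 * c := by
    have := hIneq (-1) (by norm_num) (by intro t ht; have := hQ0 t ht; simp; linarith)
    linarith
  -- positivity of a
  have ha : 0 < a := by
    by_contra hcon
    push_neg at hcon
    have hxzero : ∀ t ∈ Icc (0:ℝ) 1, x t = 0 := by
      intro t ht
      have h01 := hxMono (left_mem_Icc.2 (by norm_num)) ht ht.1
      have h02 := hxMono ht (right_mem_Icc.2 (by norm_num)) ht.2
      rw [hx0] at h01; rw [hx1] at h02
      linarith
    have hFalse : ∀ᵐ t ∂(volume.restrict (Icc (0:ℝ) 1)), False := by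
      filter_upwards [hae] with t ht
      obtain ⟨htI, hdx, -, -, -, hcx, -⟩ := ht
      have hev : x =ᶠ[nhds t] (fun _ => (0:ℝ)) := by
        filter_upwards [Icc_mem_nhds htI.1 htI.2] with s hs
        exact hxzero s hs
      rw [hev.deriv_eq, deriv_const] at hcx
      exact lt_irrefl 0 hcx
    rw [ae_iff] at hFalse
    simp only [not_false_eq_true, setOf_true] at hFalse
    rw [Measure.restrict_apply_univ] at hFalse
    rw [Real.volume_Icc] at hFalse
    norm_num at hFalse
  refine ⟨ha, ?_⟩
  rcases abs_cases c with ⟨hc, -⟩ | ⟨hc, -⟩ <;> rw [hc] <;> nlinarith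

/-- the causal future of the origin of the sub-Lorentzian Heisenberg
group is `{(x,y,z) : x ≥ 0 and −x² + y² + 4|z| ≤ 0}`; equivalently, a point
`(a,b,c) ≠ 0` is reachable from the origin by a horizontal future-directed causal
Lipschitz curve iff `a > 0` and `−a² + b² + 4|c| ≤ 0`. -/
theorem exists_causal_curve_heisenberg_iff (a b c : ℝ) :
    (∃ γ : ℝ → ℝ × ℝ × ℝ, IsLipCurve3 γ ∧ Horizontal γ ∧ IsFDCausal3 γ ∧
      γ 0 = (0, 0, 0) ∧ γ 1 = (a, b, c)) ↔
    (0 < a ∧ -a^2 + b^2 + 4 * |c| ≤ 0) := by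
  constructor
  · rintro ⟨γ, hLip, hHor, hCaus, h0, h1⟩
    exact forward_dir a b c γ hLip hHor hCaus h0 h1
  · rintro ⟨ha, hineq⟩
    rcases le_or_gt 0 c with hc | hc
    · have hm : b ^ 2 + 4 * c ≤ a ^ 2 := by
        rw [abs_of_nonneg hc] at hineq
        linarith
      obtain ⟨γ, hL, hH, hC, h4, h5⟩ := construct_nonneg a b c ha hc hm
      exact ⟨γ, hL, hH, hC, h4, h5⟩
    · have hm : (-b) ^ 2 + 4 * (-c) ≤ a ^ 2 := by
        rw [abs_of_neg hc] at hineq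
        nlinarith
      obtain ⟨γ, hL, hH, hC, h4, h5⟩ := construct_nonneg a (-b) (-c) ha (by linarith) hm
      refine ⟨fun t => ((γ t).1, -(γ t).2.1, -(γ t).2.2), ?_, ?_, ?_, ?_, ?_⟩
      · obtain ⟨K, hK⟩ := hL
        have hN : LipschitzWith 1 (fun p : ℝ × ℝ × ℝ => (p.1, -p.2.1, -p.2.2)) := by
          have h1 : LipschitzWith 1 (fun p : ℝ × ℝ × ℝ => p.1) := LipschitzWith.prod_fst
          have h2 : LipschitzWith (1 * 1) (fun p : ℝ × ℝ × ℝ => -p.2.1) := by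
            exact ((LipschitzWith.prod_fst (α := ℝ) (β := ℝ)).comp
              (LipschitzWith.prod_snd (α := ℝ) (β := ℝ × ℝ))).neg
          have h3 : LipschitzWith (1 * 1) (fun p : ℝ × ℝ × ℝ => -p.2.2) := by
            exact ((LipschitzWith.prod_snd (α := ℝ) (β := ℝ)).comp
              (LipschitzWith.prod_snd (α := ℝ) (β := ℝ × ℝ))).neg
          have := h1.prodMk (h2.prodMk h3)
          simpa using this
        refine ⟨1 * K, ?_⟩
        exact hN.comp_lipschitzOnWith hK
      · filter_upwards [hH] with t ht
        have e1 : (fun s => ((fun t => ((γ t).1, -(γ t).2.1, -(γ t).2.2)) s).2.2)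
            = fun s => -(γ s).2.2 := rfl
        have e2 : (fun s => ((fun t => ((γ t).1, -(γ t).2.1, -(γ t).2.2)) s).2.1)
            = fun s => -(γ s).2.1 := rfl
        have e3 : (fun s => ((fun t => ((γ t).1, -(γ t).2.1, -(γ t).2.2)) s).1)
            = fun s => (γ s).1 := rfl
        rw [e1, e2, e3, deriv.fun_neg, deriv.fun_neg, ht]
        show -(((γ t).1 * deriv (fun s => (γ s).2.1) t -
          deriv (fun s => (γ s).1) t * (γ t).2.1) / 2) =
          ((γ t).1 * -deriv (fun s => (γ s).2.1) t -
            deriv (fun s => (γ s).1) t * -(γ t).2.1) / 2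
        ring
      · filter_upwards [hC] with t ht
        have e2 : (fun s => ((fun t => ((γ t).1, -(γ t).2.1, -(γ t).2.2)) s).2.1)
            = fun s => -(γ s).2.1 := rfl
        have e3 : (fun s => ((fun t => ((γ t).1, -(γ t).2.1, -(γ t).2.2)) s).1)
            = fun s => (γ s).1 := rfl
        rw [e2, e3, deriv.fun_neg, abs_neg]
        exact ht
      · show ((γ 0).1, -(γ 0).2.1, -(γ 0).2.2) = ((0:ℝ), (0:ℝ), (0:ℝ))
        rw [h4]
        norm_num
      · show ((γ 1).1, -(γ 1).2.1, -(γ 1).2.2) = (a, b, c)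
        rw [h5]
        norm_num
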